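/- Let A be a symmetric n×n matrix over ℤ/4ℤ whose off-diagonal entries all lie in {0,1}. Let B be the n×n matrix over 𝔽₂ whose (i,j) entry is A_{ij} reduced modulo 2, and let r denote the rank of B over 𝔽₂. Define the complex Gauss sum S = Σ_{x ∈ {0,1}^n} i^{f(x)}, where f(x) = xᵀAx is evaluated in ℤ/4ℤ (with coordinates of x regarded as elements of ℤ/4ℤ) and i^{f(x)} means the complex unit i raised to a representative of f(x) in {0,1,2,3}. Then either S = 0 or |S|² = 2^{2n−r}. -/

import Mathlib

open Finset Matrix

noncomputable def ee (a : ZMod 4) : ℂ := Complex.I ^ a.val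

def lf (t : ZMod 2) : ZMod 4 := ((t.val : ℕ) : ZMod 4)

abbrev phi24 : ZMod 4 →+* ZMod 2 := ZMod.castHom (show (2:ℕ) ∣ 4 by norm_num) (ZMod 2)

lemma I_pow_mod (k : ℕ) : Complex.I ^ (k % 4) = Complex.I ^ k := by
  conv_rhs => rw [← Nat.div_add_mod k 4]
  rw [pow_add, pow_mul, Complex.I_pow_four, one_pow, one_mul]

lemma ee_add (a b : ZMod 4) : ee (a + b) = ee a * ee b := by
  unfold ee
  rw [← pow_add, ZMod.val_add, I_pow_mod]

lemma ee_zero : ee 0 = 1 := by simp [ee]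

lemma ee_two : ee 2 = -1 := by
  have h : (2 : ZMod 4).val = 2 := rfl
  rw [ee, h, Complex.I_sq]

lemma ee_ne_zero (a : ZMod 4) : ee a ≠ 0 := pow_ne_zero _ Complex.I_ne_zero

lemma conj_ee (a : ZMod 4) : (starRingEnd ℂ) (ee a) = ee (-a) := by
  have h1 : ee a * ee (-a) = 1 := by rw [← ee_add, add_neg_cancel, ee_zero]
  have h2 : ee a * (starRingEnd ℂ) (ee a) = 1 := by
    rw [Complex.mul_conj, ee]
    norm_num [map_pow, Complex.normSq_I]
  exact mul_left_cancel₀ (ee_ne_zero a) (h2.trans h1.symm)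

lemma lf_add : ∀ s t : ZMod 2, lf (s + t) = lf s + lf t + 2 * (lf s * lf t) := by decide

lemma two_mul_eq_lf : ∀ a : ZMod 4, 2 * a = 2 * lf (phi24 a) := by decide

lemma phi_lf : ∀ t : ZMod 2, phi24 (lf t) = t := by decide

lemma parity_eq : ∀ a : ZMod 4, phi24 a = 0 → a = 0 ∨ a = 2 := by decide

lemma zmod2_cases : ∀ t : ZMod 2, t = 0 ∨ t = 1 := by decide

lemma ee_two_lf_add_one (c : ZMod 2) : ee (2 * lf (c + 1)) = - ee (2 * lf c) := by
  rcases zmod2_cases c with h | h <;> subst h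
  · rw [show ((0 : ZMod 2) + 1) = 1 from rfl, show lf 1 = 1 from rfl,
      show lf 0 = 0 from rfl]
    norm_num [ee_two, ee_zero]
  · rw [show ((1 : ZMod 2) + 1) = 0 from rfl, show lf 1 = 1 from rfl,
      show lf 0 = 0 from rfl]
    norm_num [ee_two, ee_zero]

lemma char_sum (n : ℕ) (w : Fin n → ZMod 2) :
    ∑ y : Fin n → ZMod 2, ee (2 * lf (w ⬝ᵥ y)) = if w = 0 then (2 ^ n : ℂ) else 0 := by
  by_cases hw : w = 0
  · subst hw
    simp only [zero_dotProduct, show lf 0 = 0 from rfl, mul_zero, ee_zero, if_pos rfl]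
    rw [Finset.sum_const, Finset.card_univ]
    simp [Fintype.card_fun]
  · rw [if_neg hw]
    obtain ⟨j, hj⟩ := Function.ne_iff.mp hw
    have hj1 : w j = 1 := (zmod2_cases (w j)).resolve_left hj
    set g : (Fin n → ZMod 2) → ℂ := fun y => ee (2 * lf (w ⬝ᵥ y)) with hg
    have hrei : ∑ y, g y = ∑ y, g (y + Pi.single j 1) :=
      (Fintype.sum_equiv (Equiv.addRight (Pi.single j 1)) _ _ (fun y => rfl)).symm
    have hneg : ∀ y, g (y + Pi.single j 1) = - g y := by
      intro y
      have h : w ⬝ᵥ (y + Pi.single j 1) = w ⬝ᵥ y + 1 := by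
        rw [dotProduct_add, dotProduct_single, hj1, one_mul]
      rw [hg]
      simp only [h]
      exact ee_two_lf_add_one _
    have h2 : ∑ y, g y = - ∑ y, g y := by
      calc ∑ y, g y = ∑ y, g (y + Pi.single j 1) := hrei
      _ = ∑ y, - g y := Finset.sum_congr rfl fun y _ => hneg y
      _ = - ∑ y, g y := by rw [Finset.sum_neg_distrib]
    have h3 : (2:ℂ) * ∑ y, g y = 0 := by linear_combination h2
    exact (mul_eq_zero.mp h3).resolve_left two_ne_zero

theorem stmt_4 (n : ℕ) (A : Matrix (Fin n) (Fin n) (ZMod 4)) (hA : A.IsSymm)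
    (hoff : ∀ i j, i ≠ j → A i j = 0 ∨ A i j = 1)
    (B : Matrix (Fin n) (Fin n) (ZMod 2))
    (hB : ∀ i j, B i j = ZMod.castHom (show (2:ℕ) ∣ 4 by norm_num) (ZMod 2) (A i j))
    (r : ℕ) (hr : r = B.rank)
    (f : (Fin n → Fin 2) → ZMod 4)
    (hf : ∀ x, f x = ∑ i, ∑ j, ((x i : ℕ) : ZMod 4) * A i j * ((x j : ℕ) : ZMod 4))
    (S : ℂ) (hS : S = ∑ x : Fin n → Fin 2, Complex.I ^ (f x).val) :
    S = 0 ∨ ‖S‖ ^ 2 = 2 ^ (2 * n - r) := by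
  have hmap : A.map (phi24 : ZMod 4 →+* ZMod 2) = B := by
    ext i j; rw [Matrix.map_apply, hB]
  have hBsymm : Bᵀ = B := by
    rw [← hmap, ← Matrix.transpose_map, hA.eq]
  set mv : (Fin n → ZMod 2) → (Fin n → ZMod 4) := fun x i => lf (x i) with hmv
  set F : (Fin n → ZMod 2) → ZMod 4 := fun x => mv x ⬝ᵥ A *ᵥ mv x with hF
  have hDsym : ∀ u v : Fin n → ZMod 4, u ⬝ᵥ A *ᵥ v = v ⬝ᵥ A *ᵥ u := by
    intro u v
    rw [Matrix.dotProduct_mulVec, ← Matrix.mulVec_transpose, hA.eq, dotProduct_comm]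
  have hphiD : ∀ x y : Fin n → ZMod 2, phi24 (mv x ⬝ᵥ A *ᵥ mv y) = x ⬝ᵥ B *ᵥ y := by
    intro x y
    have h1 : (⇑phi24 ∘ mv x) = x := funext fun i => phi_lf _
    have h2 : (⇑phi24 ∘ (A *ᵥ mv y)) = B *ᵥ y := by
      funext i
      rw [Function.comp_apply, RingHom.map_mulVec, hmap]
      congr 1
      exact funext fun k => phi_lf _
    rw [RingHom.map_dotProduct, h1, h2]
  have hK : ∀ x y : Fin n → ZMod 2,
      F (x + y) = F x + F y + 2 * (mv x ⬝ᵥ A *ᵥ mv y) := by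
    intro x y
    have hm : mv (x + y) = mv x + mv y + (2 : ZMod 4) • (mv x * mv y) := by
      funext i
      show lf (x i + y i) = _
      rw [lf_add]
      simp [mul_comm, mul_assoc, mul_left_comm]
      rfl
    show mv (x + y) ⬝ᵥ A *ᵥ mv (x + y) = _
    rw [hm]
    set a := mv x
    set b := mv y
    set c := mv x * mv y
    have h4 : (4 : ZMod 4) = 0 := rfl
    simp only [add_dotProduct, smul_dotProduct, Matrix.mulVec_add, Matrix.mulVec_smul,
      dotProduct_add, dotProduct_smul, smul_eq_mul]
    linear_combination (hDsym b a) + 2 * (hDsym c a) + 2 * (hDsym c b) +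
      (a ⬝ᵥ A *ᵥ c + b ⬝ᵥ A *ᵥ c + c ⬝ᵥ A *ᵥ c) * h4
  have hpt : ∀ x : Fin n → ZMod 2, Complex.I ^ (f x).val = ee (F x) := by
    intro x
    have hFx : F x = ∑ i, ∑ j, lf (x i) * A i j * lf (x j) := by
      show mv x ⬝ᵥ A *ᵥ mv x = _
      simp only [Matrix.mulVec, dotProduct, Finset.mul_sum]
      exact Finset.sum_congr rfl fun i _ => Finset.sum_congr rfl fun j _ => by ring
    rw [hf x, hFx]
    rfl
  have hSS : S = ∑ x : Fin n → ZMod 2, ee (F x) := by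
    rw [hS]
    exact Fintype.sum_congr _ _ hpt
  have hcond : ∀ z : Fin n → ZMod 2, z ᵥ* B = B *ᵥ z := by
    intro z
    rw [← Matrix.mulVec_transpose, hBsymm]
  have hT : S * (starRingEnd ℂ) S
      = ∑ z : Fin n → ZMod 2, (if B *ᵥ z = 0 then ee (F z) * (2 ^ n : ℂ) else 0) := by
    calc S * (starRingEnd ℂ) S
        = ∑ x : Fin n → ZMod 2, ∑ y : Fin n → ZMod 2,
            ee (F x) * (starRingEnd ℂ) (ee (F y)) := by
          rw [hSS, map_sum, Finset.sum_mul_sum]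
      _ = ∑ y : Fin n → ZMod 2, ∑ x : Fin n → ZMod 2, ee (F x - F y) := by
          rw [Finset.sum_comm]
          exact Finset.sum_congr rfl fun y _ => Finset.sum_congr rfl fun x _ => by
            rw [conj_ee, ← ee_add, sub_eq_add_neg]
      _ = ∑ y : Fin n → ZMod 2, ∑ z : Fin n → ZMod 2, ee (F (z + y) - F y) :=
          Finset.sum_congr rfl fun y _ =>
            (Fintype.sum_equiv (Equiv.addRight y) _ _ fun z => rfl).symm
      _ = ∑ y : Fin n → ZMod 2, ∑ z : Fin n → ZMod 2,
            ee (F z) * ee (2 * lf ((z ᵥ* B) ⬝ᵥ y)) := by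
          refine Finset.sum_congr rfl fun y _ => Finset.sum_congr rfl fun z _ => ?_
          rw [hK z y]
          have h5 : F z + F y + 2 * (mv z ⬝ᵥ A *ᵥ mv y) - F y
              = F z + 2 * (mv z ⬝ᵥ A *ᵥ mv y) := by ring
          rw [h5, ee_add]
          congr 2
          rw [two_mul_eq_lf, hphiD, Matrix.dotProduct_mulVec]
      _ = ∑ z : Fin n → ZMod 2, ee (F z)
            * ∑ y : Fin n → ZMod 2, ee (2 * lf ((z ᵥ* B) ⬝ᵥ y)) := by
          rw [Finset.sum_comm]
          exact Finset.sum_congr rfl fun z _ => by rw [Finset.mul_sum]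
      _ = ∑ z : Fin n → ZMod 2, ee (F z) * (if z ᵥ* B = 0 then (2 ^ n : ℂ) else 0) :=
          Finset.sum_congr rfl fun z _ => by rw [char_sum]
      _ = ∑ z : Fin n → ZMod 2, (if B *ᵥ z = 0 then ee (F z) * (2 ^ n : ℂ) else 0) := by
          refine Finset.sum_congr rfl fun z _ => ?_
          rw [hcond, mul_ite, mul_zero]
  have hFker : ∀ z : Fin n → ZMod 2, B *ᵥ z = 0 → F z = 0 ∨ F z = 2 := by
    intro z hz
    apply parity_eq
    have := hphiD z z
    rw [hz, dotProduct_zero] at this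
    exact this
  have hFadd : ∀ z z₀ : Fin n → ZMod 2, B *ᵥ z₀ = 0 → F (z + z₀) = F z + F z₀ := by
    intro z z₀ hz₀
    rw [hK z z₀]
    have h6 : 2 * (mv z ⬝ᵥ A *ᵥ mv z₀) = 0 := by
      rw [two_mul_eq_lf, hphiD, hz₀, dotProduct_zero]
      rfl
    rw [h6, add_zero]
  by_cases hall : ∀ z : Fin n → ZMod 2, B *ᵥ z = 0 → F z = 0
  · -- |S|^2 = 2^(2n-r)
    right
    have hcard : ∑ z : Fin n → ZMod 2, (if B *ᵥ z = 0 then ee (F z) * (2 ^ n : ℂ) else 0)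
        = (Fintype.card {z : Fin n → ZMod 2 // B *ᵥ z = 0} : ℂ) * 2 ^ n := by
      rw [Fintype.card_subtype, ← Finset.sum_filter]
      rw [Finset.sum_congr rfl (fun z hz => by
        rw [hall z (Finset.mem_filter.mp hz).2, ee_zero, one_mul])]
      rw [Finset.sum_const, nsmul_eq_mul]
    have hrle : r ≤ n := by
      rw [hr]
      simpa using Matrix.rank_le_card_width B
    have hcardker : Fintype.card {z : Fin n → ZMod 2 // B *ᵥ z = 0} = 2 ^ (n - r) := by
      haveI : Fintype ↥(LinearMap.ker B.mulVecLin) := Fintype.ofFinite _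
      have e1 : {z : Fin n → ZMod 2 // B *ᵥ z = 0} ≃ LinearMap.ker B.mulVecLin :=
        Equiv.subtypeEquivRight (fun z => by
          simp [LinearMap.mem_ker, Matrix.mulVecLin_apply])
      rw [Fintype.card_congr e1]
      rw [Module.card_eq_pow_finrank (K := ZMod 2) (V := LinearMap.ker B.mulVecLin), ZMod.card]
      congr 1
      have h7 := LinearMap.finrank_range_add_finrank_ker (B.mulVecLin)
      rw [Module.finrank_pi, Fintype.card_fin] at h7
      have h8 : B.rank = Module.finrank (ZMod 2) (LinearMap.range B.mulVecLin) := rfl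
      omega
    have hT2 : S * (starRingEnd ℂ) S = (2:ℂ) ^ (2 * n - r) := by
      rw [hT, hcard, hcardker]
      push_cast
      rw [← pow_add]
      congr 1
      omega
    rw [Complex.mul_conj] at hT2
    have hnsq : Complex.normSq S = (2:ℝ) ^ (2 * n - r) := by exact_mod_cast hT2
    rw [Complex.sq_norm, hnsq]
  · left
    push_neg at hall
    obtain ⟨z₀, hz₀, hFz₀⟩ := hall
    have hFz₀2 : F z₀ = 2 := (hFker z₀ hz₀).resolve_left hFz₀
    have hself : z₀ + z₀ = 0 := by
      funext i
      have : ∀ t : ZMod 2, t + t = 0 := by decide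
      exact this (z₀ i)
    set g : (Fin n → ZMod 2) → ℂ :=
      fun z => if B *ᵥ z = 0 then ee (F z) * (2 ^ n : ℂ) else 0 with hg
    have hrei : ∑ z, g z = ∑ z, g (z + z₀) :=
      (Fintype.sum_equiv (Equiv.addRight z₀) _ _ fun z => rfl).symm
    have hneg : ∀ z, g (z + z₀) = - g z := by
      intro z
      by_cases hz : B *ᵥ z = 0
      · have hmem : B *ᵥ (z + z₀) = 0 := by rw [Matrix.mulVec_add, hz, hz₀, add_zero]
        rw [hg]
        simp only [if_pos hmem, if_pos hz]
        rw [hFadd z z₀ hz₀, hFz₀2, ee_add, ee_two]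
        ring
      · have hmem : ¬ B *ᵥ (z + z₀) = 0 := by
          intro h
          apply hz
          have hz' : z = (z + z₀) + z₀ := by rw [add_assoc, hself, add_zero]
          rw [hz', Matrix.mulVec_add, h, hz₀, add_zero]
        rw [hg]
        simp only [if_neg hmem, if_neg hz, neg_zero]
    have hzero : ∑ z, g z = 0 := by
      have h2 : ∑ z, g z = - ∑ z, g z := by
        calc ∑ z, g z = ∑ z, g (z + z₀) := hrei
        _ = ∑ z, - g z := Finset.sum_congr rfl fun z _ => hneg z
        _ = - ∑ z, g z := by rw [Finset.sum_neg_distrib]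
      have h3 : (2:ℂ) * ∑ z, g z = 0 := by linear_combination h2
      exact (mul_eq_zero.mp h3).resolve_left two_ne_zero
    have : S * (starRingEnd ℂ) S = 0 := by rw [hT]; exact hzero
    rw [Complex.mul_conj] at this
    exact Complex.normSq_eq_zero.mp (by exact_mod_cast this)
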